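/- Let B₁,…,B_m be symmetric real n×n matrices that are pairwise orthogonal with respect to the Frobenius inner product, i.e., ⟨B_α,B_β⟩ = ‖B_α‖² δ_{αβ}. Assuming the Li–Li inequality Σ_{α,β}‖[B_α,B_β]‖² + Σ_{α,β}⟨B_α,B_β⟩² ≤ (3/2)(Σ_α‖B_α‖²)² and the Chern–do Carmo–Kobayashi inequality ‖[B_α,B_β]‖² ≤ 2‖B_α‖²‖B_β‖², one has Σ_{α,β=1}^m ‖[B_α,B_β]‖² ≤ (3(m-1)/(2m-1)) (Σ_{α=1}^m ‖B_α‖²)² for m ≥ 2. -/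

import Mathlib

open Matrix

noncomputable def frobInner {n : ℕ} (A B : Matrix (Fin n) (Fin n) ℝ) : ℝ :=
  (Aᵀ * B).trace

noncomputable def frobSq {n : ℕ} (A : Matrix (Fin n) (Fin n) ℝ) : ℝ :=
  frobInner A A

def mcomm {n : ℕ} (A B : Matrix (Fin n) (Fin n) ℝ) : Matrix (Fin n) (Fin n) ℝ :=
  A * B - B * A

theorem weak_ddvv_step {n m : ℕ} (hm : 2 ≤ m) (B : Fin m → Matrix (Fin n) (Fin n) ℝ)
    (hsymm : ∀ α, (B α).IsSymm)
    (horth : ∀ α β, frobInner (B α) (B β) = if α = β then frobSq (B α) else 0)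
    (hLiLi : (∑ α, ∑ β, frobSq (mcomm (B α) (B β))) +
      (∑ α, ∑ β, (frobInner (B α) (B β)) ^ 2) ≤ (3 / 2) * (∑ α, frobSq (B α)) ^ 2)
    (hCdCK : ∀ α β, frobSq (mcomm (B α) (B β)) ≤ 2 * frobSq (B α) * frobSq (B β)) :
    ∑ α, ∑ β, frobSq (mcomm (B α) (B β)) ≤
      (3 * ((m : ℝ) - 1) / (2 * (m : ℝ) - 1)) * (∑ α, frobSq (B α)) ^ 2 := by
  set S := ∑ α, frobSq (B α) with hS
  have hQ : (∑ α, ∑ β, (frobInner (B α) (B β)) ^ 2) = ∑ α, (frobSq (B α)) ^ 2 := by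
    refine Finset.sum_congr rfl fun α _ => ?_
    rw [Finset.sum_eq_single α]
    · rw [horth]; simp
    · intro b _ hb; rw [horth]; simp [Ne.symm hb]
    · simp
  have hCS : S ^ 2 ≤ (m : ℝ) * ∑ α, (frobSq (B α)) ^ 2 := by
    have := sq_sum_le_card_mul_sum_sq (s := (Finset.univ : Finset (Fin m)))
      (f := fun α => frobSq (B α))
    simpa using this
  have hm' : (2 : ℝ) ≤ (m : ℝ) := by exact_mod_cast hm
  have hmpos : (0 : ℝ) < m := by linarith
  have h1 : ∑ α, ∑ β, frobSq (mcomm (B α) (B β)) ≤ (3 / 2) * S ^ 2 - S ^ 2 / m := by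
    rw [hQ] at hLiLi
    have : S ^ 2 / m ≤ ∑ α, (frobSq (B α)) ^ 2 := by
      rw [div_le_iff₀ hmpos]; linarith [hCS]
    linarith
  have hS2 : (0 : ℝ) ≤ S ^ 2 := sq_nonneg _
  have hden : (0 : ℝ) < 2 * (m : ℝ) - 1 := by linarith
  have hc : 3 / 2 - 1 / (m : ℝ) ≤ 3 * ((m : ℝ) - 1) / (2 * (m : ℝ) - 1) := by
    rw [div_sub_div _ _ two_ne_zero hmpos.ne', div_le_div_iff₀ (by positivity) hden]
    nlinarith
  have h2 : (3 / 2) * S ^ 2 - S ^ 2 / m ≤ (3 * ((m : ℝ) - 1) / (2 * (m : ℝ) - 1)) * S ^ 2 := by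
    calc (3 / 2) * S ^ 2 - S ^ 2 / m = (3 / 2 - 1 / (m : ℝ)) * S ^ 2 := by
          field_simp
      _ ≤ _ := mul_le_mul_of_nonneg_right hc hS2
  linarith
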